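/- Let u : ℕ → Σ be an infinite word over a finite alphabet. The following are equivalent: (i) u is uniformly recurrent; (ii) Fac(u) is inexhaustible and is well-quasi-ordered by the factor order; (iii) Fac(u) is infinite and every proper subset of Fac(u) that is downward closed for the factor order is finite. -/

import Mathlib

/-- The set of finite factors of the infinite word `u : ℕ → A`. -/
def FacN {A : Type*} (u : ℕ → A) : Set (List A) :=
  {v | ∃ i : ℕ, v = (List.range v.length).map fun k => u (i + k)}


/-- A set `S` is well-quasi-ordered by the relation `r` if every infinite sequence of
elements of `S` contains an infinite increasing subsequence. -/
def WqoOn {A : Type*} (r : A → A → Prop) (S : Set A) : Prop :=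
  ∀ f : ℕ → A, (∀ n, f n ∈ S) →
    ∃ g : ℕ → ℕ, StrictMono g ∧ ∀ m n, m < n → r (f (g m)) (f (g n))

/-- A set of finite words, not reduced to the empty word, is inexhaustible if for every
`v ∈ C` there exists a word `w` such that `v ++ w ++ v ∈ C`. -/
def Inexh {A : Type*} (C : Set (List A)) : Prop :=
  C.Nonempty ∧ C ≠ {[]} ∧ ∀ v ∈ C, ∃ w : List A, v ++ w ++ v ∈ C

/-- `u` is uniformly recurrent. -/
def UnifRec {A : Type*} (u : ℕ → A) : Prop :=
  ∀ n : ℕ, ∃ m : ℕ, ∀ v ∈ FacN u, v.length = n → ∀ w ∈ FacN u, w.length = m → v <:+: w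

section Aux

variable {A : Type*}

/-- The window of `u` of length `n` starting at `i`. -/
def Win (u : ℕ → A) (i n : ℕ) : List A := (List.range n).map fun k => u (i + k)

@[simp] lemma Win_length (u : ℕ → A) (i n : ℕ) : (Win u i n).length = n := by
  simp [Win]

lemma mem_fac_iff {u : ℕ → A} {v : List A} : v ∈ FacN u ↔ ∃ i, v = Win u i v.length :=
  Iff.rfl

lemma Win_mem (u : ℕ → A) (i n : ℕ) : Win u i n ∈ FacN u :=
  mem_fac_iff.mpr ⟨i, by rw [Win_length]⟩

lemma Win_add (u : ℕ → A) (i a b : ℕ) : Win u i (a + b) = Win u i a ++ Win u (i + a) b := by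
  simp [Win, List.range_add, Function.comp, add_assoc]

lemma Win_eq_append {u : ℕ → A} {i m : ℕ} {a b : List A} (h : Win u i m = a ++ b) :
    a = Win u i a.length ∧ b = Win u (i + a.length) b.length := by
  have hm : m = a.length + b.length := by
    have h2 := Win_length u i m
    rw [h] at h2
    simp at h2
    omega
  subst hm
  rw [Win_add] at h
  have h3 := List.append_inj h (by simp)
  exact ⟨h3.1.symm, h3.2.symm⟩

lemma occ_of_eq_append {u : ℕ → A} {i m : ℕ} {s x t : List A}
    (h : Win u i m = s ++ x ++ t) : x = Win u (i + s.length) x.length := by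
  rw [List.append_assoc] at h
  obtain ⟨-, h2⟩ := Win_eq_append h
  obtain ⟨h3, -⟩ := Win_eq_append h2.symm
  exact h3

lemma Win_infix {u : ℕ → A} {i m t n : ℕ} (h : t + n ≤ m) :
    Win u (i + t) n <:+: Win u i m := by
  have hm : m = t + (n + (m - t - n)) := by omega
  rw [hm, Win_add, Win_add]
  exact ⟨Win u i t, Win u (i + t + n) (m - t - n), by simp [List.append_assoc]⟩

lemma fac_infix_closed {u : ℕ → A} {v x : List A} (hv : v ∈ FacN u) (hx : x <:+: v) :
    x ∈ FacN u := by
  obtain ⟨i, hi⟩ := mem_fac_iff.mp hv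
  obtain ⟨s, t, hst⟩ := hx
  have h : Win u i (s ++ x ++ t).length = s ++ x ++ t := by rw [← hst] at hi; exact hi.symm
  exact mem_fac_iff.mpr ⟨i + s.length, occ_of_eq_append h⟩

lemma not_occ_of_not_infix {u : ℕ → A} {v : List A} {j L : ℕ}
    (h : ¬ v <:+: Win u j L) {t : ℕ} (ht : t + v.length ≤ L) :
    Win u (j + t) v.length ≠ v := by
  intro he
  apply h
  rw [← he]
  exact Win_infix ht

lemma Win_sub_eq {u : ℕ → A} {i j L : ℕ} (h : Win u i L = Win u j L) {t n : ℕ}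
    (ht : t + n ≤ L) : Win u (i + t) n = Win u (j + t) n := by
  have hL : L = t + (n + (L - t - n)) := by omega
  rw [hL, Win_add, Win_add, Win_add, Win_add] at h
  have h1 := List.append_inj h (by simp)
  have h2 := List.append_inj h1.2 (by simp)
  exact h2.1

end Aux
section Aux2

variable {A : Type*}

/-- Pointwise uniform recurrence. -/
def PW (u : ℕ → A) : Prop :=
  ∀ v ∈ FacN u, ∃ m : ℕ, ∀ w ∈ FacN u, m ≤ w.length → v <:+: w

lemma pw_of_unifRec {u : ℕ → A} (h : UnifRec u) : PW u := by
  intro v hv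
  obtain ⟨m, hm⟩ := h v.length
  refine ⟨m, fun w hw hlen => ?_⟩
  obtain ⟨j, hj⟩ := mem_fac_iff.mp hw
  have hsub : Win u j m <:+: w := by
    rw [hj]
    have h0 := Win_infix (u := u) (i := j) (t := 0) (m := w.length) (n := m) (by omega)
    simpa using h0
  exact (hm v hv rfl (Win u j m) (Win_mem u j m) (by simp)).trans hsub

lemma unifRec_of_pw [Finite A] {u : ℕ → A} (h : PW u) : UnifRec u := by
  classical
  intro n
  have hfin : {v : List A | v ∈ FacN u ∧ v.length = n}.Finite :=
    (List.finite_length_le A n).subset (fun v hv => le_of_eq hv.2)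
  let M : List A → ℕ := fun v => if hv : v ∈ FacN u then (h v hv).choose else 0
  refine ⟨hfin.toFinset.sup M, fun v hv hvn w hw hwM => ?_⟩
  have hle : M v ≤ hfin.toFinset.sup M :=
    Finset.le_sup (hfin.mem_toFinset.mpr ⟨hv, hvn⟩)
  have hMv : M v = (h v hv).choose := dif_pos hv
  exact (h v hv).choose_spec w hw (by omega)

lemma fac_infinite (u : ℕ → A) : (FacN u).Infinite :=
  Set.infinite_of_injective_forall_mem
    (f := fun n => Win u 0 n)
    (fun a b hab => by
      have := congrArg List.length hab
      simpa using this)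
    (fun n => Win_mem u 0 n)

lemma inexh_of_pw {u : ℕ → A} (h : PW u) : Inexh (FacN u) := by
  refine ⟨⟨Win u 0 0, Win_mem u 0 0⟩, ?_, ?_⟩
  · intro hset
    have h1 : Win u 0 1 ∈ FacN u := Win_mem u 0 1
    rw [hset] at h1
    have h2 : (Win u 0 1).length = 1 := Win_length u 0 1
    rw [Set.mem_singleton_iff.mp h1] at h2
    simp at h2
  · intro v hv
    obtain ⟨m, hm⟩ := h v hv
    obtain ⟨i, hi⟩ := mem_fac_iff.mp hv
    have hw' : v <:+: Win u (i + v.length) m :=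
      hm _ (Win_mem u (i + v.length) m) (by simp)
    obtain ⟨s, t, hst⟩ := hw'
    have hocc : v = Win u (i + v.length + s.length) v.length :=
      occ_of_eq_append hst.symm
    refine ⟨Win u (i + v.length) s.length, ?_⟩
    rw [mem_fac_iff]
    refine ⟨i, ?_⟩
    have hlen : (v ++ Win u (i + v.length) s.length ++ v).length
        = v.length + (s.length + v.length) := by
      simp
    rw [hlen, Win_add, Win_add, ← hi, ← hocc]
    simp [List.append_assoc]

end Aux2
section Aux3

variable {A : Type*}

lemma wqo_of_pw [Finite A] {u : ℕ → A} (h : PW u) : WqoOn (· <:+: ·) (FacN u) := by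
  classical
  intro f hf
  by_cases hb : ∃ B j, ∀ k, j < k → (f k).length ≤ B
  · obtain ⟨B, j, hB⟩ := hb
    have hfin : {l : List A | l.length ≤ B}.Finite := List.finite_length_le A B
    have hinf : {k | j < k}.Infinite := Set.Ioi_infinite j
    have hEx : ∃ v, {k | j < k ∧ f k = v}.Infinite := by
      by_contra hc
      push_neg at hc
      have hfin2 : {k | j < k}.Finite := by
        have hsub : {k | j < k} ⊆
            ⋃ v ∈ {l : List A | l.length ≤ B}, {k | j < k ∧ f k = v} := by
          intro k hk
          exact Set.mem_biUnion (hB k hk) ⟨hk, rfl⟩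
        exact ((hfin.biUnion fun v _ => hc v)).subset hsub
      exact hinf hfin2
    obtain ⟨v, hv⟩ := hEx
    refine ⟨Nat.nth (fun k => j < k ∧ f k = v), Nat.nth_strictMono hv, ?_⟩
    intro m n _
    have h1 := Nat.nth_mem_of_infinite hv m
    have h2 := Nat.nth_mem_of_infinite hv n
    rw [h1.2, h2.2]
  · push_neg at hb
    have step : ∀ j : ℕ, ∃ k, j < k ∧ f j <:+: f k := by
      intro j
      obtain ⟨m, hm⟩ := h (f j) (hf j)
      obtain ⟨k, hk1, hk2⟩ := hb m j
      exact ⟨k, hk1, hm (f k) (hf k) (le_of_lt hk2)⟩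
    choose st hst1 hst2 using step
    refine ⟨fun n => st^[n] 0, ?_, ?_⟩
    · refine strictMono_nat_of_lt_succ fun n => ?_
      rw [Function.iterate_succ_apply']
      exact hst1 _
    · intro m n hmn
      induction n with
      | zero => omega
      | succ n ih =>
        have hnext : f (st^[n] 0) <:+: f (st^[n+1] 0) := by
          rw [Function.iterate_succ_apply']
          exact hst2 _
        rcases Nat.lt_or_ge m n with h' | h'
        · exact (ih h').trans hnext
        · have : m = n := by omega
          subst this
          exact hnext

lemma closed_finite_of_pw [Finite A] {u : ℕ → A} (h : PW u) {X : Set (List A)}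
    (hX : X ⊂ FacN u) (hdc : ∀ a b : List A, b ∈ X → a <:+: b → a ∈ X) : X.Finite := by
  have hsub := hX.subset
  obtain ⟨z, hzF, hzX⟩ := Set.exists_of_ssubset hX
  obtain ⟨m, hm⟩ := h z hzF
  refine (List.finite_length_le A m).subset fun x hx => ?_
  simp only [Set.mem_setOf_eq]
  by_contra hlen
  push_neg at hlen
  exact hzX (hdc z x hx (hm x (hsub hx) (by omega)))

lemma pw_of_iii {u : ℕ → A}
    (hX : ∀ X : Set (List A), X ⊂ FacN u →
      (∀ a b : List A, b ∈ X → a <:+: b → a ∈ X) → X.Finite) :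
    PW u := by
  by_contra hpw
  unfold PW at hpw
  push_neg at hpw
  obtain ⟨v, hvF, hbad⟩ := hpw
  have hdc : ∀ a b : List A, b ∈ {x | x ∈ FacN u ∧ ¬ v <:+: x} → a <:+: b →
      a ∈ {x | x ∈ FacN u ∧ ¬ v <:+: x} := by
    rintro a b ⟨hbF, hbv⟩ hab
    exact ⟨fac_infix_closed hbF hab, fun hva => hbv (hva.trans hab)⟩
  have hss : {x | x ∈ FacN u ∧ ¬ v <:+: x} ⊂ FacN u := by
    refine HasSubset.Subset.ssubset_of_ne (fun x hx => hx.1) fun he => ?_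
    have hvX : v ∈ {x | x ∈ FacN u ∧ ¬ v <:+: x} := he.symm ▸ hvF
    exact hvX.2 List.infix_rfl
  have hfin := hX _ hss hdc
  obtain ⟨L, hL⟩ := (hfin.image List.length).bddAbove
  obtain ⟨w, hwF, hwlen, hwv⟩ := hbad (L + 1)
  have hwX : w ∈ {x | x ∈ FacN u ∧ ¬ v <:+: x} := ⟨hwF, hwv⟩
  have := hL (Set.mem_image_of_mem List.length hwX)
  omega

end Aux3
section Aux4

variable {A : Type*}

lemma not_infix_isolated {u : ℕ → A} {v : List A}
    {p q p' q' : ℕ} (hpq : p < q) (hpq' : p' < q')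
    (hp : Win u p v.length = v) (hq : Win u q v.length = v)
    (hq'iso : ∀ r, p' < r → r < q' → Win u r v.length ≠ v)
    (hlt : q - p < q' - p') :
    ¬ (Win u p (q - p + v.length) <:+: Win u p' (q' - p' + v.length)) := by
  intro hinf
  obtain ⟨s, t, hst⟩ := hinf
  have hxa : Win u p (q - p + v.length)
      = Win u (p' + s.length) (Win u p (q - p + v.length)).length :=
    occ_of_eq_append hst.symm
  rw [Win_length] at hxa
  have hsb : s.length + (q - p + v.length) + t.length = q' - p' + v.length := by
    have hc := congrArg List.length hst
    simp only [List.length_append, Win_length] at hc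
    omega
  have hocc_s : Win u (p' + s.length) v.length = v := by
    have h1 : Win u (p' + s.length) (q - p + v.length)
        = Win u p (q - p + v.length) := hxa.symm
    have h2 := Win_sub_eq h1 (t := 0) (n := v.length) (by omega)
    simpa [hp] using h2
  have hs0 : s.length = 0 := by
    by_contra hs
    exact hq'iso (p' + s.length) (by omega) (by omega) hocc_s
  have h1 : Win u p' (q - p + v.length) = Win u p (q - p + v.length) := by
    rw [hxa, hs0, add_zero]
  have hocc_G : Win u (p' + (q - p)) v.length = v := by
    have h2 := Win_sub_eq h1 (t := q - p) (n := v.length) (le_refl _)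
    rw [show p + (q - p) = q from by omega] at h2
    rw [h2, hq]
  exact hq'iso (p' + (q - p)) (by omega) (by omega) hocc_G

lemma pw_of_inexh_wqo {u : ℕ → A} (hin : Inexh (FacN u))
    (hwqo : WqoOn (· <:+: ·) (FacN u)) : PW u := by
  classical
  by_contra hpw
  unfold PW at hpw
  push_neg at hpw
  obtain ⟨v, hvF, hbad⟩ := hpw
  have hne : v ≠ [] := by
    rintro rfl
    obtain ⟨w, -, -, hnv⟩ := hbad 0
    exact hnv List.nil_infix
  have hnpos : 0 < v.length := List.length_pos_iff.mpr hne
  -- arbitrarily long factors starting with v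
  have growth : ∀ k : ℕ, ∃ z, z ∈ FacN u ∧ v <+: z ∧ k < z.length := by
    intro k
    induction k with
    | zero => exact ⟨v, hvF, List.prefix_rfl, hnpos⟩
    | succ k ih =>
      obtain ⟨z, hz, hvz, hlz⟩ := ih
      obtain ⟨w, hw⟩ := hin.2.2 z hz
      refine ⟨z ++ w ++ z, hw, (hvz.trans (List.prefix_append z w)).trans
        (List.prefix_append (z ++ w) z), ?_⟩
      simp only [List.length_append]
      omega
  -- occurrences of v arbitrarily far out
  have occ_beyond : ∀ B : ℕ, ∃ i, B < i ∧ Win u i v.length = v := by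
    intro B
    obtain ⟨z, hz, hvz, hlz⟩ := growth B
    obtain ⟨w, hw⟩ := hin.2.2 z hz
    obtain ⟨i, hi⟩ := mem_fac_iff.mp hw
    obtain ⟨r, hr⟩ := hvz
    have he : Win u i (z ++ w ++ z).length = z ++ w ++ v ++ r := by
      rw [← hi, List.append_assoc (z ++ w), hr]
    have hocc := occ_of_eq_append he
    refine ⟨i + (z ++ w).length, ?_, hocc.symm⟩
    simp only [List.length_append]
    omega
  -- isolated pairs of occurrences with arbitrarily large gaps
  have pairs : ∀ k : ℕ, ∃ p q : ℕ, Win u p v.length = v ∧ Win u q v.length = v ∧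
      p + k < q ∧ ∀ r, p < r → r < q → Win u r v.length ≠ v := by
    intro k
    obtain ⟨p₀, hp₀⟩ := mem_fac_iff.mp hvF
    obtain ⟨w, hwF, hwlen, hwav⟩ := hbad (p₀ + k + v.length + 1)
    obtain ⟨j, hj⟩ := mem_fac_iff.mp hwF
    rw [hj] at hwav
    have hav : ∀ t, t + v.length ≤ w.length → Win u (j + t) v.length ≠ v :=
      fun t ht => not_occ_of_not_infix hwav ht
    have hp₀j : p₀ < j := by
      by_contra hle
      push_neg at hle
      have hc := hav (p₀ - j) (by omega)
      rw [show j + (p₀ - j) = p₀ from by omega] at hc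
      exact hc hp₀.symm
    have hp_spec : Win u (Nat.findGreatest (fun r => Win u r v.length = v) (j - 1))
        v.length = v :=
      Nat.findGreatest_spec (P := fun r => Win u r v.length = v) (m := p₀) (n := j - 1) (by omega) hp₀.symm
    have hp_le : Nat.findGreatest (fun r => Win u r v.length = v) (j - 1) ≤ j - 1 :=
      Nat.findGreatest_le _
    have hex : ∃ r, j ≤ r ∧ Win u r v.length = v := by
      obtain ⟨i, hi1, hi2⟩ := occ_beyond j
      exact ⟨i, le_of_lt hi1, hi2⟩
    have hq_spec := Nat.find_spec hex
    have hq_big : j + w.length - v.length < Nat.find hex := by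
      by_contra hle
      push_neg at hle
      have hc := hav (Nat.find hex - j) (by omega)
      rw [show j + (Nat.find hex - j) = Nat.find hex from by omega] at hc
      exact hc hq_spec.2
    refine ⟨Nat.findGreatest (fun r => Win u r v.length = v) (j - 1), Nat.find hex,
      hp_spec, hq_spec.2, by omega, ?_⟩
    intro r hpr hrq hocc
    rcases lt_or_ge r j with h' | h'
    · exact Nat.findGreatest_is_greatest hpr (by omega) hocc
    · exact Nat.find_min hex hrq ⟨h', hocc⟩
  choose pk qk hpk hqk hgap hiso using pairs
  have hGk : ∀ k, k < qk k - pk k := fun k => by have := hgap k; omega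
  have hKlt : ∀ i : ℕ, qk ((fun k => qk k - pk k)^[i] 0) - pk ((fun k => qk k - pk k)^[i] 0)
      < qk ((fun k => qk k - pk k)^[i+1] 0) - pk ((fun k => qk k - pk k)^[i+1] 0) := by
    intro i
    rw [Function.iterate_succ_apply']
    exact hGk _
  have hGmono : StrictMono (fun i =>
      qk ((fun k => qk k - pk k)^[i] 0) - pk ((fun k => qk k - pk k)^[i] 0)) :=
    strictMono_nat_of_lt_succ hKlt
  obtain ⟨g, hgm, hch⟩ := hwqo
    (fun i => Win u (pk ((fun k => qk k - pk k)^[i] 0))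
      ((qk ((fun k => qk k - pk k)^[i] 0) - pk ((fun k => qk k - pk k)^[i] 0)) + v.length))
    (fun i => Win_mem u _ _)
  have hab : (qk ((fun k => qk k - pk k)^[g 0] 0) - pk ((fun k => qk k - pk k)^[g 0] 0))
      < (qk ((fun k => qk k - pk k)^[g 1] 0) - pk ((fun k => qk k - pk k)^[g 1] 0)) :=
    hGmono (hgm Nat.zero_lt_one)
  have hinfix := hch 0 1 Nat.zero_lt_one
  exact not_infix_isolated
    (by have := hgap ((fun k => qk k - pk k)^[g 0] 0); omega)
    (by have := hgap ((fun k => qk k - pk k)^[g 1] 0); omega)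
    (hpk _) (hqk _) (hiso _) hab hinfix

end Aux4

theorem stmt3 {A : Type*} [Finite A] (u : ℕ → A) :
    (UnifRec u ↔ (Inexh (FacN u) ∧ WqoOn (· <:+: ·) (FacN u))) ∧
    (UnifRec u ↔ ((FacN u).Infinite ∧
      ∀ X : Set (List A), X ⊂ FacN u →
        (∀ a b : List A, b ∈ X → a <:+: b → a ∈ X) → X.Finite)) := by
  constructor
  · constructor
    · intro h
      exact ⟨inexh_of_pw (pw_of_unifRec h), wqo_of_pw (pw_of_unifRec h)⟩
    · rintro ⟨h1, h2⟩
      exact unifRec_of_pw (pw_of_inexh_wqo h1 h2)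
  · constructor
    · intro h
      exact ⟨fac_infinite u, fun X hX hdc => closed_finite_of_pw (pw_of_unifRec h) hX hdc⟩
    · rintro ⟨-, hX⟩
      exact unifRec_of_pw (pw_of_iii hX)
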